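/- Let n ≤ N and g_1,...,g_n ∈ F_{q^N} be linearly independent over F_q. Then the code generated by the k × n Moore matrix G_k (rows (g_j^{q^i})_j for i = 0,...,k−1) has minimum rank distance exactly n − k + 1, i.e., it is an MRD code. -/

import Mathlib

/-- Rank norm of a vector over the base field `K`. -/
noncomputable def rankNorm (K : Type*) {L : Type*} [Field K] [Field L] [Algebra K L]
    {n : ℕ} (x : Fin n → L) : ℕ :=
  Module.finrank K (Submodule.span K (Set.range x))

open Polynomial

section aux
variable {K L : Type*} [Field K] [Fintype K] [Field L] [Fintype L] [Algebra K L]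

lemma frob_pow_add (x y : L) (e : ℕ) :
    (x + y) ^ (Fintype.card K) ^ e = x ^ (Fintype.card K) ^ e + y ^ (Fintype.card K) ^ e := by
  haveI : CharP K (ringChar K) := ringChar.charP K
  obtain ⟨m, hp, hcard⟩ := FiniteField.card K (ringChar K)
  haveI : Fact (ringChar K).Prime := ⟨hp⟩
  haveI : CharP L (ringChar K) := charP_of_injective_algebraMap (algebraMap K L).injective _
  rw [hcard, ← pow_mul]
  exact add_pow_char_pow ..

lemma frob_pow_smul (a : K) (x : L) (e : ℕ) :
    (a • x) ^ (Fintype.card K) ^ e = a • (x ^ (Fintype.card K) ^ e) := by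
  rw [Algebra.smul_def, Algebra.smul_def, mul_pow, ← map_pow, FiniteField.pow_card_pow]

/-- The `K`-linear map `x ↦ ∑ i, a i * x ^ q ^ i`. -/
noncomputable def psiMap (k : ℕ) (a : Fin k → L) : L →ₗ[K] L where
  toFun x := ∑ i : Fin k, a i * x ^ (Fintype.card K) ^ (i : ℕ)
  map_add' x y := by
    simp only [frob_pow_add, mul_add]
    rw [Finset.sum_add_distrib]
  map_smul' r x := by
    simp only [RingHom.id_apply, frob_pow_smul, Finset.smul_sum]
    congr 1; ext i; rw [mul_smul_comm]

end aux

section aux2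
set_option linter.unusedSectionVars false
variable {K L : Type*} [Field K] [Fintype K] [Field L] [Fintype L] [Algebra K L]

lemma psiMap_ker_finrank_le (k : ℕ) (a : Fin k → L) (ha : a ≠ 0) :
    Module.finrank K (LinearMap.ker (psiMap (K := K) k a)) ≤ k - 1 := by
  classical
  set q := Fintype.card K with hqdef
  have hq : 1 < q := Fintype.one_lt_card
  set P : L[X] := ∑ i : Fin k, C (a i) * X ^ (q ^ (i : ℕ)) with hPdef
  obtain ⟨i0, hi0⟩ := Function.ne_iff.mp ha
  have hcoeff : P.coeff (q ^ (i0 : ℕ)) = a i0 := by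
    rw [hPdef, Polynomial.finset_sum_coeff]
    rw [Finset.sum_eq_single i0]
    · simp
    · intro i _ hne
      have : q ^ (i : ℕ) ≠ q ^ (i0 : ℕ) := fun h =>
        hne (Fin.ext (Nat.pow_right_injective hq h))
      rw [Polynomial.coeff_C_mul, coeff_X_pow, if_neg (fun h : q ^ (i0:ℕ) = q ^ (i:ℕ) => this h.symm), mul_zero]
    · simp
  have hP : P ≠ 0 := fun h => hi0 (by simp [h] at hcoeff; simp [hcoeff])
  have hdeg : P.natDegree ≤ q ^ (k - 1) := by
    apply Polynomial.natDegree_sum_le_of_forall_le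
    intro i _
    refine (Polynomial.natDegree_C_mul_le _ _).trans ?_
    rw [Polynomial.natDegree_X_pow]
    exact Nat.pow_le_pow_right (le_of_lt hq) (by omega)
  have heval : ∀ x : L, psiMap (K := K) k a x = P.eval x := by
    intro x
    simp [psiMap, hPdef, Polynomial.eval_finset_sum, hqdef]
  haveI := Fintype.ofFinite ↥(LinearMap.ker (psiMap (K := K) k a))
  have hcardle : Fintype.card ↥(LinearMap.ker (psiMap (K := K) k a)) ≤ q ^ (k - 1) := by
    have hinj : Function.Injective
        (fun x : ↥(LinearMap.ker (psiMap (K := K) k a)) =>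
          (⟨x.1, by
            rw [Multiset.mem_toFinset, Polynomial.mem_roots hP]
            show P.eval x.1 = 0
            rw [← heval]
            exact LinearMap.mem_ker.mp x.2⟩ : {y // y ∈ P.roots.toFinset})) := by
      intro x y h
      have := congrArg Subtype.val h
      exact Subtype.ext this
    calc Fintype.card ↥(LinearMap.ker (psiMap (K := K) k a))
        ≤ Fintype.card {y // y ∈ P.roots.toFinset} := Fintype.card_le_of_injective _ hinj
      _ = P.roots.toFinset.card := Fintype.card_coe _
      _ ≤ Multiset.card P.roots := Multiset.toFinset_card_le _
      _ ≤ P.natDegree := Polynomial.card_roots' P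
      _ ≤ q ^ (k - 1) := hdeg
  rw [Module.card_eq_pow_finrank (K := K)] at hcardle
  exact (Nat.pow_le_pow_iff_right hq).mp hcardle

end aux2

section aux3
set_option linter.unusedSectionVars false
variable {K L : Type*} [Field K] [Fintype K] [Field L] [Fintype L] [Algebra K L]

lemma rank_formula (n k : ℕ) (g : Fin n → L) (hg : LinearIndependent K g) (a : Fin k → L) :
    rankNorm K (fun j => psiMap (K := K) k a (g j))
      + Module.finrank K ↥(Submodule.span K (Set.range g) ⊓ LinearMap.ker (psiMap (K := K) k a))
      = n := by
  set ψ := psiMap (K := K) k a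
  set V := Submodule.span K (Set.range g) with hV
  have h1 : rankNorm K (fun j => ψ (g j)) = Module.finrank K ↥(V.map ψ) := by
    have heq : Submodule.span K (Set.range fun j => ψ (g j)) = V.map ψ := by
      rw [show Set.range (fun j => ψ (g j)) = ψ '' Set.range g from Set.range_comp ψ g,
        Submodule.span_image, hV]
    unfold rankNorm
    rw [heq]
  have h2 := LinearMap.finrank_range_add_finrank_ker (ψ.domRestrict V)
  rw [LinearMap.range_domRestrict, LinearMap.ker_domRestrict] at h2
  have h3 : Module.finrank K ↥(Submodule.comap V.subtype (LinearMap.ker ψ))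
      = Module.finrank K ↥(V ⊓ LinearMap.ker ψ) := by
    rw [← Submodule.map_comap_subtype, Submodule.finrank_map_subtype_eq]
  have h4 : Module.finrank K ↥V = n := by
    rw [hV, finrank_span_eq_card hg, Fintype.card_fin]
  rw [h1, ← h4, ← h2, h3]

end aux3

/-- the code generated by the `k × n` Moore matrix is MRD: its minimum
rank distance is exactly `n − k + 1`. -/
theorem moore_code_is_MRD (K L : Type*) [Field K] [Fintype K] [Field L] [Fintype L]
    [Algebra K L] (n k : ℕ) (hn : n ≤ Module.finrank K L) (hk1 : 1 ≤ k) (hkn : k ≤ n)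
    (g : Fin n → L) (hg : LinearIndependent K g) :
    IsLeast {r : ℕ | ∃ c ∈ Submodule.span L
        (Set.range fun (i : Fin k) => fun (j : Fin n) => g j ^ (Fintype.card K) ^ (i : ℕ)),
      c ≠ 0 ∧ rankNorm K c = r} (n - k + 1) := by
  classical
  set q := Fintype.card K with hq
  set row : Fin k → Fin n → L := fun i j => g j ^ q ^ (i : ℕ) with hrow
  have hle : k - 1 ≤ n := by omega
  -- the key fact: for any nonzero coefficient vector `a`, the rank of the codeword is
  -- `n - finrank (V ⊓ ker ψ)` with the kernel part at most `k - 1`.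
  have hinfle : ∀ a : Fin k → L, a ≠ 0 →
      Module.finrank K ↥(Submodule.span K (Set.range g) ⊓ LinearMap.ker (psiMap (K := K) k a))
        ≤ k - 1 := fun a ha =>
    le_trans (Submodule.finrank_mono inf_le_right) (psiMap_ker_finrank_le k a ha)
  constructor
  · -- membership: construct a codeword of rank exactly n - k + 1
    set M : (Fin k → L) →ₗ[L] (Fin (k - 1) → L) :=
      LinearMap.pi (fun j => ∑ i : Fin k,
        (g (Fin.castLE hle j)) ^ q ^ (i : ℕ) • LinearMap.proj i) with hM
    have hni : ¬ Function.Injective M := by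
      intro h
      have h1 := LinearMap.finrank_le_finrank_of_injective h
      rw [Module.finrank_fin_fun, Module.finrank_fin_fun] at h1
      omega
    have hker : LinearMap.ker M ≠ ⊥ := fun h => hni (LinearMap.ker_eq_bot.mp h)
    obtain ⟨a, haM, ha0⟩ := Submodule.exists_mem_ne_zero_of_ne_bot hker
    have haM0 : ∀ j : Fin (k - 1), psiMap (K := K) k a (g (Fin.castLE hle j)) = 0 := by
      intro j
      have := congrFun (LinearMap.mem_ker.mp haM) j
      simp only [hM, LinearMap.pi_apply, LinearMap.sum_apply, LinearMap.smul_apply,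
        LinearMap.proj_apply, smul_eq_mul, Pi.zero_apply] at this
      show (∑ i : Fin k, a i * (g (Fin.castLE hle j)) ^ q ^ (i : ℕ)) = 0
      rw [← this]
      exact Finset.sum_congr rfl fun i _ => mul_comm _ _
    set c : Fin n → L := fun j => psiMap (K := K) k a (g j) with hc
    have hcmem : c ∈ Submodule.span L (Set.range row) := by
      have hsum : c = ∑ i : Fin k, a i • row i := by
        funext j
        simp only [hc, hrow, Finset.sum_apply, Pi.smul_apply, smul_eq_mul]
        rfl
      rw [hsum]
      exact Submodule.sum_mem _ fun i _ =>
        Submodule.smul_mem _ _ (Submodule.subset_span ⟨i, rfl⟩)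
    -- the kernel intersection has dimension exactly k - 1
    set V := Submodule.span K (Set.range g) with hV
    set D := Submodule.span K (Set.range (g ∘ Fin.castLE hle)) with hD
    have hDdim : Module.finrank K ↥D = k - 1 := by
      rw [hD, finrank_span_eq_card (hg.comp _ (Fin.castLE_injective hle)), Fintype.card_fin]
    have hDle : D ≤ V ⊓ LinearMap.ker (psiMap (K := K) k a) := by
      refine le_inf ?_ ?_
      · exact Submodule.span_mono (by rintro _ ⟨j, rfl⟩; exact ⟨_, rfl⟩)
      · rw [hD, Submodule.span_le]
        rintro _ ⟨j, rfl⟩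
        exact LinearMap.mem_ker.mpr (haM0 j)
    have hdim : Module.finrank K
        ↥(V ⊓ LinearMap.ker (psiMap (K := K) k a)) = k - 1 :=
      le_antisymm (hinfle a ha0) (hDdim ▸ Submodule.finrank_mono hDle)
    have hrf := rank_formula n k g hg a
    rw [← hc, ← hV, hdim] at hrf
    have hrank : rankNorm K c = n - k + 1 := by omega
    refine ⟨c, hcmem, ?_, hrank⟩
    intro h0
    have : rankNorm K c = 0 := by
      haveI : Nonempty (Fin n) := ⟨⟨0, by omega⟩⟩
      rw [h0]
      unfold rankNorm
      rw [show Set.range (0 : Fin n → L) = {0} from Set.range_const,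
        Submodule.span_zero_singleton, finrank_bot]
    omega
  · -- lower bound
    rintro r ⟨c, hcmem, hc0, rfl⟩
    obtain ⟨a, ha⟩ := (Submodule.mem_span_range_iff_exists_fun L).mp hcmem
    have hca : c = fun j => psiMap (K := K) k a (g j) := by
      funext j
      rw [← ha]
      simp only [Finset.sum_apply, Pi.smul_apply, smul_eq_mul]
      rfl
    have ha0 : a ≠ 0 := by
      rintro rfl
      apply hc0
      rw [hca]
      funext j
      show (∑ i : Fin k, (0 : Fin k → L) i * (g j) ^ q ^ (i : ℕ)) = 0
      simp
    have hrf := rank_formula n k g hg a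
    rw [← hca] at hrf
    have h2 := hinfle a ha0
    omega
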